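/- Let H be a finite-dimensional ribbon Hopf algebra and K = H^* the coend of mod_l(H), with coadjoint action h \cdot \varphi = \varphi(S(h') ? h'') and multiplication m_K(\varphi \otimes \psi) = \varphi(a_j ? a_i) \star \psi(S(b_i) b_j ?) (\star the convolution product of H^*), unit \varepsilon, and counit \varepsilon_K(\varphi) = \varphi(1). Then the right integral \mu^r on H is a two-sided cointegral for K: m_K(\mu^r \otimes \varphi) = m_K(\varphi \otimes \mu^r) = \varphi(1)\mu^r for all \varphi \in H^*. -/
import Mathlib


open scoped TensorProduct
open TensorProduct

variable {k A : Type} [Field k] [Ring A] [HopfAlgebra k A]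

/-- Convolution product on the dual Hopf algebra `H* = O(H)`. -/
noncomputable def conv (φ ψ : Module.Dual k A) : Module.Dual k A :=
  (LinearMap.mul' k k) ∘ₗ (TensorProduct.map φ ψ) ∘ₗ (Coalgebra.comul (R := k))

set_option maxHeartbeats 1000000

lemma conv_sandwich (φ ψ : Module.Dual k A) (p q u v : A) (h : A) :
    conv (φ ∘ₗ LinearMap.mulRight k u ∘ₗ LinearMap.mulLeft k p)
         (ψ ∘ₗ LinearMap.mulRight k v ∘ₗ LinearMap.mulLeft k q) h
      = (LinearMap.mul' k k) (TensorProduct.map φ ψ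
          ((p ⊗ₜ[k] q) * Coalgebra.comul h * (u ⊗ₜ[k] v))) := by
  rw [conv]
  simp only [LinearMap.comp_apply]
  generalize Coalgebra.comul (R := k) h = t
  induction t using TensorProduct.induction_on with
  | zero => simp
  | tmul x y => simp [Algebra.TensorProduct.tmul_mul_tmul]
  | add s t hs ht => simp only [map_add, add_mul, mul_add, hs, ht]

lemma conv_left (φ ψ : Module.Dual k A) (p q : A) (h : A) :
    conv (φ ∘ₗ LinearMap.mulLeft k p) (ψ ∘ₗ LinearMap.mulLeft k q) h
      = (LinearMap.mul' k k) (TensorProduct.map φ ψ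
          ((p ⊗ₜ[k] q) * Coalgebra.comul h)) := by
  rw [conv]
  simp only [LinearMap.comp_apply]
  generalize Coalgebra.comul (R := k) h = t
  induction t using TensorProduct.induction_on with
  | zero => simp
  | tmul x y => simp [Algebra.TensorProduct.tmul_mul_tmul]
  | add s t hs ht => simp only [map_add, add_mul, mul_add, hs, ht]

lemma mulmap_comm (φ ψ : Module.Dual k A) (t : A ⊗[k] A) :
    (LinearMap.mul' k k) (TensorProduct.map φ ψ ((TensorProduct.comm k A A) t))
      = (LinearMap.mul' k k) (TensorProduct.map ψ φ t) := by
  induction t using TensorProduct.induction_on with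
  | zero => simp
  | tmul x y => simp [mul_comm]
  | add s t hs ht => simp only [map_add, hs, ht]

lemma conv_apply (φ ψ : Module.Dual k A) (h : A) :
    conv φ ψ h = (LinearMap.mul' k k) (TensorProduct.map φ ψ (Coalgebra.comul h)) := rfl

/-- For the coend `K = H*` of `mod_l(H)` with multiplication
`m_K(φ ⊗ ψ) = φ(aⱼ ? aᵢ) ⋆ ψ(S(bᵢ)bⱼ ?)`, the right integral `μʳ` on `H` is a
two-sided cointegral: `m_K(μʳ ⊗ φ) = m_K(φ ⊗ μʳ) = φ(1) μʳ`. -/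
theorem right_integral_is_two_sided_cointegral
    [FiniteDimensional k A]
    (Sinv : A →ₗ[k] A)
    (hS1 : ∀ x : A, Sinv (HopfAlgebra.antipode (R := k) x) = x)
    (hS2 : ∀ x : A, HopfAlgebra.antipode (R := k) (Sinv x) = x)
    -- the R-matrix
    (ι : Type) [Fintype ι] (a b : ι → A)
    (hRunit : IsUnit (∑ i, a i ⊗ₜ[k] b i))
    (hIntertwine : ∀ x : A, (∑ i, a i ⊗ₜ[k] b i) * Coalgebra.comul x
        = (TensorProduct.comm k A A) (Coalgebra.comul x) * (∑ i, a i ⊗ₜ[k] b i))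
    (hex1 : (∑ i, (Coalgebra.comul (R := k) (a i)) ⊗ₜ[k] b i : (A ⊗[k] A) ⊗[k] A)
        = (∑ i, (a i ⊗ₜ[k] (1:A)) ⊗ₜ[k] b i) * (∑ i, ((1:A) ⊗ₜ[k] a i) ⊗ₜ[k] b i))
    (hex2 : (∑ i, a i ⊗ₜ[k] (Coalgebra.comul (R := k) (b i)) : A ⊗[k] (A ⊗[k] A))
        = (∑ i, a i ⊗ₜ[k] ((1:A) ⊗ₜ[k] b i)) * (∑ i, a i ⊗ₜ[k] (b i ⊗ₜ[k] (1:A))))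
    -- the right integral `μʳ` on `H`, with its quasi-cyclicity property
    (μr : Module.Dual k A)
    (hInt : ∀ φ : Module.Dual k A, conv μr φ = φ 1 • μr)
    (hcyc : ∀ x y : A,
      μr (x * y) = μr (HopfAlgebra.antipode (R := k) (HopfAlgebra.antipode (R := k) y) * x))
    -- the multiplication of the coend `K = H*`
    (mK : Module.Dual k A → Module.Dual k A → Module.Dual k A)
    (hmK : ∀ φ ψ : Module.Dual k A,
      mK φ ψ = ∑ i, ∑ j, conv
        (φ ∘ₗ LinearMap.mulRight k (a i) ∘ₗ LinearMap.mulLeft k (a j))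
        (ψ ∘ₗ LinearMap.mulLeft k (HopfAlgebra.antipode (R := k) (b i) * b j))) :
    ∀ φ : Module.Dual k A, mK μr φ = φ 1 • μr ∧ mK φ μr = φ 1 • μr := by
  classical
  set S : A →ₗ[k] A := HopfAlgebra.antipode (R := k) with hSdef
  obtain ⟨U, hU⟩ := hRunit
  set R : A ⊗[k] A := ∑ i, a i ⊗ₜ[k] b i with hRdef
  have hRr : R * ↑U⁻¹ = 1 := by rw [← hU]; exact U.mul_inv
  have hrR : (↑U⁻¹ : A ⊗[k] A) * R = 1 := by rw [← hU]; exact U.inv_mul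
  -- the algebra morphism  ε ⊗ id : A ⊗ A → A
  set G : A ⊗[k] A →ₐ[k] A :=
    Algebra.TensorProduct.lift ((Algebra.ofId k A).comp (Bialgebra.counitAlgHom k A))
      (AlgHom.id k A) (fun x y => by
        simp only [AlgHom.coe_comp, Function.comp_apply, Algebra.ofId_apply]
        exact Algebra.commute_algebraMap_left _ y) with hGdef
  have hGtmul : ∀ x y : A, G (x ⊗ₜ[k] y) = Coalgebra.counit (R := k) x • y := by
    intro x y
    rw [hGdef, Algebra.TensorProduct.lift_tmul]
    simp [Algebra.ofId_apply, Algebra.smul_def]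
  have hG : ∀ x : A, G (Coalgebra.comul (R := k) x) = x := by
    intro x
    have h1 : ∀ t : A ⊗[k] A,
        G t = (TensorProduct.lid k A) ((Coalgebra.counit (R := k)).rTensor A t) := by
      intro t
      induction t using TensorProduct.induction_on with
      | zero => simp
      | tmul x y => rw [hGtmul]; simp [LinearMap.rTensor_tmul]
      | add s t hs ht => simp [hs, ht]
    rw [h1, Coalgebra.rTensor_counit_comul]
    simp
  -- step E1 : ∑ (ε(aᵢ) • 1) ⊗ bᵢ = 1
  have hU1 : (∑ i, (Coalgebra.counit (R := k) (a i) • (1:A)) ⊗ₜ[k] b i) = (1 : A ⊗[k] A) := by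
    have h1 := congrArg (Algebra.TensorProduct.map G (AlgHom.id k A)) hex1
    rw [map_sum, map_mul, map_sum, map_sum] at h1
    simp only [Algebra.TensorProduct.map_tmul, AlgHom.coe_id, id_eq, hG, hGtmul] at h1
    simp only [Bialgebra.counit_one, one_smul] at h1
    rw [← hRdef] at h1
    calc (∑ i, (Coalgebra.counit (R := k) (a i) • (1:A)) ⊗ₜ[k] b i)
        = (∑ i, (Coalgebra.counit (R := k) (a i) • (1:A)) ⊗ₜ[k] b i) * (R * ↑U⁻¹) := by
          rw [hRr, mul_one]
      _ = (1 : A ⊗[k] A) := by rw [← mul_assoc, ← h1, hRr]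
  -- step E2 : ∑ aᵢ ⊗ (ε(bᵢ) • 1) = 1
  have hV1 : (∑ i, a i ⊗ₜ[k] (Coalgebra.counit (R := k) (b i) • (1:A))) = (1 : A ⊗[k] A) := by
    have h1 := congrArg (Algebra.TensorProduct.map (AlgHom.id k A) G) hex2
    rw [map_sum, map_mul, map_sum, map_sum] at h1
    simp only [Algebra.TensorProduct.map_tmul, AlgHom.coe_id, id_eq, hG, hGtmul] at h1
    simp only [Bialgebra.counit_one, one_smul] at h1
    rw [← hRdef] at h1
    calc (∑ i, a i ⊗ₜ[k] (Coalgebra.counit (R := k) (b i) • (1:A)))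
        = (↑U⁻¹ * R) * (∑ i, a i ⊗ₜ[k] (Coalgebra.counit (R := k) (b i) • (1:A))) := by
          rw [hrR, one_mul]
      _ = ↑U⁻¹ * R := by rw [mul_assoc, ← h1]
      _ = 1 := hrR
  -- S 1 = 1
  have hSone : S (1:A) = 1 := by
    have h := HopfAlgebra.mul_antipode_rTensor_comul_apply (R := k) (a := (1:A))
    rw [Bialgebra.comul_one, Algebra.TensorProduct.one_def] at h
    simpa [hSdef] using h
  -- step E3 : C * R = 1
  set C : A ⊗[k] A := ∑ i, S (a i) ⊗ₜ[k] b i with hCdef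
  have hex1' : (∑ i, (Coalgebra.comul (R := k) (a i)) ⊗ₜ[k] b i : (A ⊗[k] A) ⊗[k] A)
      = ∑ i, ∑ j, (a i ⊗ₜ[k] a j) ⊗ₜ[k] (b i * b j) := by
    rw [hex1, Finset.sum_mul_sum]
    simp [Algebra.TensorProduct.tmul_mul_tmul]
  have hCR : C * R = 1 := by
    have h1 := congrArg (((LinearMap.mul' k A) ∘ₗ (S.rTensor A)).rTensor A) hex1'
    simp only [map_sum, LinearMap.rTensor_tmul, LinearMap.comp_apply] at h1
    simp only [hSdef, HopfAlgebra.mul_antipode_rTensor_comul_apply,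
      LinearMap.rTensor_tmul, LinearMap.mul'_apply, Algebra.algebraMap_eq_smul_one] at h1
    rw [← hSdef] at h1
    have h2 : C * R = ∑ i, ∑ j, (S (a i) * a j) ⊗ₜ[k] (b i * b j) := by
      rw [hCdef, hRdef, Finset.sum_mul_sum]
      simp [Algebra.TensorProduct.tmul_mul_tmul]
    rw [h2, ← h1, hU1]
  have hCu : C = ↑U⁻¹ := by
    calc C = C * (R * ↑U⁻¹) := by rw [hRr, mul_one]
      _ = (C * R) * ↑U⁻¹ := by rw [mul_assoc]
      _ = ↑U⁻¹ := by rw [hCR, one_mul]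
  have hRC : R * C = 1 := by rw [hCu]; exact hRr
  -- step E4 : the inverse of hex2
  set Θ : A ⊗[k] A →ₐ[k] A ⊗[k] (A ⊗[k] A) :=
    Algebra.TensorProduct.map (AlgHom.id k A) (Bialgebra.comulAlgHom k A) with hTdef
  set Pr : A ⊗[k] A →ₐ[k] A ⊗[k] (A ⊗[k] A) :=
    Algebra.TensorProduct.map (AlgHom.id k A) Algebra.TensorProduct.includeRight with hPrdef
  set Pl : A ⊗[k] A →ₐ[k] A ⊗[k] (A ⊗[k] A) :=
    Algebra.TensorProduct.map (AlgHom.id k A) Algebra.TensorProduct.includeLeft with hPldef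
  have hTR : Θ R = ∑ i, a i ⊗ₜ[k] (Coalgebra.comul (R := k) (b i)) := by
    rw [hRdef, map_sum]
    simp [hTdef, Algebra.TensorProduct.map_tmul, Bialgebra.comulAlgHom_apply]
  have hPrR : Pr R = ∑ i, a i ⊗ₜ[k] ((1:A) ⊗ₜ[k] b i) := by
    rw [hRdef, map_sum]; simp [hPrdef]
  have hPlR : Pl R = ∑ i, a i ⊗ₜ[k] (b i ⊗ₜ[k] (1:A)) := by
    rw [hRdef, map_sum]; simp [hPldef]
  have hPrC : Pr C = ∑ i, S (a i) ⊗ₜ[k] ((1:A) ⊗ₜ[k] b i) := by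
    rw [hCdef, map_sum]; simp [hPrdef]
  have hPlC : Pl C = ∑ i, S (a i) ⊗ₜ[k] (b i ⊗ₜ[k] (1:A)) := by
    rw [hCdef, map_sum]; simp [hPldef]
  have hTC : Θ C = ∑ i, S (a i) ⊗ₜ[k] (Coalgebra.comul (R := k) (b i)) := by
    rw [hCdef, map_sum]
    simp [hTdef, Algebra.TensorProduct.map_tmul, Bialgebra.comulAlgHom_apply]
  have hTRR : Θ R = Pr R * Pl R := by rw [hTR, hPrR, hPlR]; exact hex2
  have hE4 : Θ C = Pl C * Pr C := by
    have hXa : (Pl C * Pr C) * Θ R = 1 := by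
      rw [hTRR, mul_assoc (Pl C) (Pr C) _, ← mul_assoc (Pr C) (Pr R) _,
        ← map_mul Pr, hCR, map_one, one_mul, ← map_mul Pl, hCR, map_one]
    have hXb : Θ R * Θ C = 1 := by rw [← map_mul, hRC, map_one]
    calc Θ C = 1 * Θ C := (one_mul _).symm
      _ = ((Pl C * Pr C) * Θ R) * Θ C := by rw [hXa]
      _ = (Pl C * Pr C) * (Θ R * Θ C) := by rw [mul_assoc]
      _ = Pl C * Pr C := by rw [hXb, mul_one]
  -- step E5 : (S ⊗ S) R = R
  have hE4' : (∑ i, S (a i) ⊗ₜ[k] (Coalgebra.comul (R := k) (b i)))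
      = ∑ i, ∑ j, (S (a i) * S (a j)) ⊗ₜ[k] (b i ⊗ₜ[k] b j) := by
    rw [← hTC, hE4, hPlC, hPrC, Finset.sum_mul_sum]
    simp [Algebra.TensorProduct.tmul_mul_tmul]
  set E : A ⊗[k] A := ∑ i, S (a i) ⊗ₜ[k] S (b i) with hEdef
  have hWV : (∑ i, S (a i) ⊗ₜ[k] (Coalgebra.counit (R := k) (b i) • (1:A)))
      = (1 : A ⊗[k] A) := by
    have h := congrArg (S.rTensor A) hV1
    rw [map_sum, Algebra.TensorProduct.one_def] at h
    simp only [LinearMap.rTensor_tmul] at h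
    rw [hSone] at h
    rw [h, ← Algebra.TensorProduct.one_def]
  have hCE : C * E = 1 := by
    have h1 := congrArg (((LinearMap.mul' k A) ∘ₗ (S.lTensor A)).lTensor A) hE4'
    simp only [map_sum, LinearMap.lTensor_tmul, LinearMap.comp_apply] at h1
    simp only [hSdef, HopfAlgebra.mul_antipode_lTensor_comul_apply,
      LinearMap.lTensor_tmul, LinearMap.mul'_apply, Algebra.algebraMap_eq_smul_one] at h1
    rw [← hSdef] at h1
    have h2 : C * E = ∑ i, ∑ j, (S (a i) * S (a j)) ⊗ₜ[k] (b i * S (b j)) := by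
      rw [hCdef, hEdef, Finset.sum_mul_sum]
      simp [Algebra.TensorProduct.tmul_mul_tmul]
    rw [h2, ← h1, hWV]
  have hE5 : E = R := by
    calc E = 1 * E := (one_mul _).symm
      _ = (R * C) * E := by rw [hRC]
      _ = R * (C * E) := by rw [mul_assoc]
      _ = R := by rw [hCE, mul_one]
  -- step E6 : ∑ S²(aᵢ) ⊗ S(bᵢ) = C
  have hT1 : (∑ i, S (S (a i)) ⊗ₜ[k] S (b i)) = C := by
    have h := congrArg (S.rTensor A) hE5
    rw [hEdef, hRdef, map_sum, map_sum] at h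
    simpa only [LinearMap.rTensor_tmul, hCdef] using h
  -- step E7 : ∑ aᵢ ⊗ S⁻¹(bᵢ) = C
  have hX7 : (∑ i, a i ⊗ₜ[k] Sinv (b i)) = C := by
    have h := congrArg (Sinv.lTensor A) hE5
    rw [hEdef, hRdef, map_sum, map_sum] at h
    simp only [LinearMap.lTensor_tmul, hS1] at h
    rw [← h, hCdef]
  have hRX : R * (∑ i, a i ⊗ₜ[k] Sinv (b i)) = 1 := by rw [hX7]; exact hRC
  -- main computation
  intro φ
  constructor
  · -- left cointegral property
    have hf : ∀ i j : ι, (μr ∘ₗ LinearMap.mulRight k (a i) ∘ₗ LinearMap.mulLeft k (a j))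
        = μr ∘ₗ LinearMap.mulLeft k (S (S (a i)) * a j) := by
      intro i j
      ext x
      simp only [LinearMap.comp_apply, LinearMap.mulRight_apply, LinearMap.mulLeft_apply]
      rw [hcyc (a j * x) (a i), ← mul_assoc]
    rw [hmK]
    ext h
    simp only [LinearMap.coe_sum, Finset.sum_apply]
    have hterm : ∀ i j : ι,
        conv (μr ∘ₗ LinearMap.mulRight k (a i) ∘ₗ LinearMap.mulLeft k (a j))
          (φ ∘ₗ LinearMap.mulLeft k (S (b i) * b j)) h
        = (LinearMap.mul' k k) (TensorProduct.map μr φ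
            (((S (S (a i)) * a j) ⊗ₜ[k] (S (b i) * b j)) * Coalgebra.comul h)) := by
      intro i j
      rw [hf i j, conv_left]
    rw [Finset.sum_congr rfl fun i _ => Finset.sum_congr rfl fun j _ => hterm i j]
    have hsum : (∑ i, ∑ j, (LinearMap.mul' k k) (TensorProduct.map μr φ
          (((S (S (a i)) * a j) ⊗ₜ[k] (S (b i) * b j)) * Coalgebra.comul h)))
        = (LinearMap.mul' k k) (TensorProduct.map μr φ
          ((∑ i, ∑ j, (S (S (a i)) * a j) ⊗ₜ[k] (S (b i) * b j)) * Coalgebra.comul h)) := by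
      simp only [Finset.sum_mul, map_sum]
    have hTT : (∑ i, ∑ j, (S (S (a i)) * a j) ⊗ₜ[k] (S (b i) * b j)) = (1 : A ⊗[k] A) := by
      have h2 : (∑ i, S (S (a i)) ⊗ₜ[k] S (b i)) * R
          = ∑ i, ∑ j, (S (S (a i)) * a j) ⊗ₜ[k] (S (b i) * b j) := by
        rw [hRdef, Finset.sum_mul_sum]
        simp [Algebra.TensorProduct.tmul_mul_tmul]
      rw [← h2, hT1, hCR]
    rw [hsum, hTT, one_mul, ← conv_apply, hInt]
  · -- right cointegral property
    have hg : ∀ i j : ι, (μr ∘ₗ LinearMap.mulLeft k (S (b i) * b j))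
        = μr ∘ₗ LinearMap.mulRight k (Sinv (b i)) ∘ₗ LinearMap.mulLeft k (b j) := by
      intro i j
      ext y
      simp only [LinearMap.comp_apply, LinearMap.mulRight_apply, LinearMap.mulLeft_apply]
      rw [hcyc (b j * y) (Sinv (b i)), hS2, ← mul_assoc]
    rw [hmK]
    ext h
    simp only [LinearMap.coe_sum, Finset.sum_apply]
    have hterm : ∀ i j : ι,
        conv (φ ∘ₗ LinearMap.mulRight k (a i) ∘ₗ LinearMap.mulLeft k (a j))
          (μr ∘ₗ LinearMap.mulLeft k (S (b i) * b j)) h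
        = (LinearMap.mul' k k) (TensorProduct.map φ μr
            ((a j ⊗ₜ[k] b j) * Coalgebra.comul h * (a i ⊗ₜ[k] Sinv (b i)))) := by
      intro i j
      rw [hg i j, conv_sandwich]
    rw [Finset.sum_congr rfl fun i _ => Finset.sum_congr rfl fun j _ => hterm i j]
    have hsum : (∑ i, ∑ j, (LinearMap.mul' k k) (TensorProduct.map φ μr
          ((a j ⊗ₜ[k] b j) * Coalgebra.comul h * (a i ⊗ₜ[k] Sinv (b i)))))
        = (LinearMap.mul' k k) (TensorProduct.map φ μr
          (R * Coalgebra.comul h * (∑ i, a i ⊗ₜ[k] Sinv (b i)))) := by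
      rw [hRdef]
      simp only [Finset.sum_mul, Finset.mul_sum, map_sum]
    rw [hsum, hIntertwine h, mul_assoc, hRX, mul_one, mulmap_comm, ← conv_apply, hInt]
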